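/- Let A be an n×n real matrix whose characteristic polynomial (over ℂ) has roots λ₁, λ₂, …, λ_n counted with multiplicity, where λ₁ is real and is associated with a real eigenvector v having no zero components. Let D = diag(v) and B = D^{-1} A D. Then for every i ∈ {2, 3, …, n} (the λ_i for i ≥ 2 being the roots, with multiplicity, of charpoly(A)/(X − λ₁)), every p ∈ ℕ ∪ {∞} with p ≥ 1, and every positive integer k: |λ_i| ≤ (τ_p(B^k))^{1/k}. -/

import Mathlib

open Matrix
open scoped ENNReal

/-- Non-increasing (descending) sort of a list of reals. -/
noncomputable def sortDesc (l : List ℝ) : List ℝ := (l.insertionSort (· ≤ ·)).reverse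

/-- Given the descending rearrangement `l` of `n` numbers, the sum of the largest
(about) half minus the sum of the smallest (about) half, skipping the middle
element when `n` is odd. -/
noncomputable def halfSumDiff (n : ℕ) (l : List ℝ) : ℝ :=
  if n % 2 = 1 then (l.take ((n - 1) / 2)).sum - (l.drop ((n + 1) / 2)).sum
  else (l.take (n / 2)).sum - (l.drop (n / 2)).sum

/-- Radius of the `i`-th Gershgorin disc of the second type of `M`, computed from
the `i`-th row of `M` with the diagonal entry replaced by `0`. -/
noncomputable def secondTypeRadius {n : ℕ} (M : Matrix (Fin n) (Fin n) ℝ) (i : Fin n) : ℝ :=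
  halfSumDiff n (sortDesc (List.ofFn fun j : Fin n => if j = i then 0 else M i j))

/-- The `i`-th Gershgorin disc of the second type of `M`. -/
noncomputable def secondTypeDisc {n : ℕ} (M : Matrix (Fin n) (Fin n) ℝ) (i : Fin n) : Set ℂ :=
  Metric.closedBall ((M i i : ℝ) : ℂ) (secondTypeRadius M i)

/-- The Gershgorin region of the second type of `M`. -/
noncomputable def secondTypeRegion {n : ℕ} (M : Matrix (Fin n) (Fin n) ℝ) : Set ℂ :=
  ⋃ i : Fin n, secondTypeDisc M i

/-- `μ` is a (complex) eigenvalue of the real matrix `A`, i.e. a complex root of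
its characteristic polynomial. -/
def IsEigenvalueC {n : ℕ} (A : Matrix (Fin n) (Fin n) ℝ) (μ : ℂ) : Prop :=
  ((A.map ((↑) : ℝ → ℂ)).charpoly).IsRoot μ

/-- The `k`-th largest element (1-indexed) among the `n - 1` off-diagonal entries of
column `j` of `B`. -/
noncomputable def kthLargestOffDiag {n : ℕ} (B : Matrix (Fin n) (Fin n) ℝ) (j : Fin n)
    (k : ℕ) : ℝ :=
  (sortDesc (((List.ofFn fun i : Fin n => B i j).eraseIdx j.val))).getD (k - 1) 0

/-- The ℓ_p norm of a vector in ℝ^n. -/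
noncomputable def lpNorm {n : ℕ} (p : ℝ≥0∞) (x : Fin n → ℝ) : ℝ :=
  @norm (PiLp p fun _ : Fin n => ℝ) _ ((WithLp.equiv p (∀ _ : Fin n, ℝ)).symm x)

/-- The seminorm-like quantity `τ_p(B)`: the supremum of `‖Bᵀ x‖_p` over all real
vectors `x` with `xᵀ e = 0` and `‖x‖_p = 1`. -/
noncomputable def tau {n : ℕ} (p : ℝ≥0∞) (B : Matrix (Fin n) (Fin n) ℝ) : ℝ :=
  sSup { t : ℝ | ∃ x : Fin n → ℝ, (∑ i, x i) = 0 ∧ lpNorm p x = 1 ∧ t = lpNorm p (Bᵀ *ᵥ x) }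

/-- The Ostrowski–Brauer set `Γ(M)` of a real square matrix `M`. -/
noncomputable def brauerSet {n : ℕ} (M : Matrix (Fin n) (Fin n) ℝ) : Set ℂ :=
  ⋃ (i : Fin n) (j : Fin n) (_ : i < j),
    { y : ℂ | ‖y - (M i i : ℝ)‖ * ‖y - (M j j : ℝ)‖ ≤
        (∑ k ∈ Finset.univ.filter fun k => k ≠ i, |M i k|) *
        (∑ k ∈ Finset.univ.filter fun k => k ≠ j, |M j k|) }

/-- `cs_j(A)` from Definition 2.3: sorted column sums difference. -/
noncomputable def csCol {n : ℕ} (A : Matrix (Fin n) (Fin n) ℝ) (j : Fin n) : ℝ :=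
  halfSumDiff n (sortDesc (List.ofFn fun i : Fin n => A i j))

section
open Polynomial
lemma aux_exists_eig {ι : Type*} [Fintype ι] [DecidableEq ι]
    (M : Matrix ι ι ℂ) {μ : ℂ} (h : M.charpoly.IsRoot μ) :
    ∃ w : ι → ℂ, w ≠ 0 ∧ M *ᵥ w = μ • w := by
  have hdet : (μ • (1 : Matrix ι ι ℂ) - M).det = 0 := by
    have h0 : ((charmatrix M).map (evalRingHom μ)).det = 0 := by
      have h2 := RingHom.map_det (evalRingHom μ) (charmatrix M)
      rw [RingHom.mapMatrix_apply] at h2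
      rw [← h2]
      simpa [Matrix.charpoly] using h
    have hmap : (charmatrix M).map (evalRingHom μ) = μ • (1 : Matrix ι ι ℂ) - M := by
      ext i j
      by_cases hij : i = j
      · subst hij; simp [charmatrix_apply_eq]
      · simp [charmatrix_apply_ne _ _ _ hij, Matrix.one_apply_ne hij]
    rwa [hmap] at h0
  obtain ⟨w, hw0, hw⟩ := (Matrix.exists_mulVec_eq_zero_iff).2 hdet
  refine ⟨w, hw0, ?_⟩
  rw [sub_mulVec, smul_mulVec, one_mulVec, sub_eq_zero] at hw
  exact hw.symm

lemma aux_charpoly_conj {ι : Type*} [Fintype ι] [DecidableEq ι] {R : Type*} [CommRing R]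
    (Q R' N : Matrix ι ι R) (h1 : R' * Q = 1) (h2 : Q * R' = 1) :
    (R' * N * Q).charpoly = N.charpoly := by
  have hmap : charmatrix (R' * N * Q) =
      (R'.map C) * charmatrix N * (Q.map C) := by
    rw [charmatrix, charmatrix]
    simp only [RingHom.mapMatrix_apply]
    rw [mul_sub, sub_mul]
    congr 1
    · have hc : (R'.map C) * (Matrix.scalar ι (X : R[X])) = (Matrix.scalar ι (X : R[X])) * (R'.map C) :=
        (Matrix.scalar_commute (X : R[X]) (fun r' => Commute.all _ _) _).symm
      rw [hc, Matrix.mul_assoc, ← Matrix.map_mul, h1, Matrix.map_one _ (map_zero C) (map_one C), mul_one]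
    · rw [← Matrix.map_mul, ← Matrix.map_mul]
  rw [Matrix.charpoly, hmap, det_mul, det_mul, mul_right_comm, ← det_mul, ← Matrix.map_mul, h1,
    Matrix.map_one _ (map_zero C) (map_one C), det_one, one_mul]
  rfl

lemma aux_charpoly_transpose {ι : Type*} [Fintype ι] [DecidableEq ι] {R : Type*} [CommRing R]
    (M : Matrix ι ι R) : M.transpose.charpoly = M.charpoly := by
  rw [Matrix.charpoly, Matrix.charpoly, ← Matrix.det_transpose (charmatrix M)]
  congr 1
  ext i j
  by_cases hij : i = j
  · subst hij; simp [charmatrix_apply_eq]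
  · simp [charmatrix_apply_ne _ _ _ hij, charmatrix_apply_ne _ _ _ (Ne.symm hij), Matrix.transpose_apply]


lemma aux_left_eigvec {n : ℕ} (hn : 0 < n) (N : Matrix (Fin n) (Fin n) ℂ) (lam : Fin n → ℂ)
    (hroots : N.charpoly.roots = Finset.univ.val.map lam)
    (hones : N *ᵥ (fun _ => (1 : ℂ)) = lam ⟨0, hn⟩ • (fun _ => (1 : ℂ)))
    (i : Fin n) (hi : i ≠ ⟨0, hn⟩) :
    ∃ z : Fin n → ℂ, z ≠ 0 ∧ (∑ j, z j) = 0 ∧ Nᵀ *ᵥ z = lam i • z := by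
  set o : Fin n := ⟨0, hn⟩ with ho
  set l1 : ℂ := lam o with hl1
  set u : Matrix (Fin n) (Fin n) ℂ := Matrix.of (fun a b => if b = o ∧ a ≠ o then 1 else 0) with hu
  have huu : u * u = 0 := by
    ext a c
    rw [Matrix.mul_apply]
    refine Finset.sum_eq_zero (fun d _ => ?_)
    by_cases hd : d = o
    · subst hd; simp [hu]
    · simp [hu, hd]
  set Q : Matrix (Fin n) (Fin n) ℂ := 1 + u with hQdef
  set R : Matrix (Fin n) (Fin n) ℂ := 1 - u with hRdef
  have hQR : Q * R = 1 := by
    have h : Q * R = 1 - u * u := by rw [hQdef, hRdef]; noncomm_ring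
    rw [h, huu, sub_zero]
  have hRQ : R * Q = 1 := by
    have h : R * Q = 1 - u * u := by rw [hQdef, hRdef]; noncomm_ring
    rw [h, huu, sub_zero]
  have hRones : R *ᵥ (fun _ => (1 : ℂ)) = fun a => if a = o then 1 else 0 := by
    funext a
    simp only [hRdef, Matrix.sub_mulVec, Matrix.one_mulVec, Pi.sub_apply]
    have hsum : (u *ᵥ fun _ => (1 : ℂ)) a = if a = o then 0 else 1 := by
      simp only [Matrix.mulVec, dotProduct, mul_one, hu, Matrix.of_apply]
      have hfun : (fun b => if b = o ∧ a ≠ o then (1:ℂ) else 0)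
          = fun b => if b = o then (if a = o then 0 else 1) else 0 := by
        funext b
        by_cases hb : b = o <;> by_cases ha : a = o <;> simp [hb, ha]
      rw [show (∑ b, if b = o ∧ a ≠ o then (1:ℂ) else 0)
          = ∑ b, (fun b => if b = o then (if a = o then (0:ℂ) else 1) else 0) b from by
        rw [hfun]]
      simp
    rw [hsum]
    by_cases ha : a = o <;> simp [ha]
  have hQones : Q *ᵥ Pi.single o (1 : ℂ) = fun _ => (1 : ℂ) := by
    funext a
    simp only [Matrix.mulVec, dotProduct]
    rw [Finset.sum_eq_single o]
    · by_cases ha : a = o <;> simp [hQdef, hu, Matrix.one_apply, ha, Matrix.add_apply]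
    · intro b _ hb; simp [Pi.single_apply, hb]
    · simp
  set C : Matrix (Fin n) (Fin n) ℂ := R * N * Q with hCdef
  have hCcol : ∀ a, C a o = if a = o then l1 else 0 := by
    intro a
    have h1 : C *ᵥ Pi.single o (1 : ℂ) = l1 • fun b => if b = o then (1:ℂ) else 0 := by
      rw [hCdef, ← Matrix.mulVec_mulVec, ← Matrix.mulVec_mulVec, hQones, hones,
        Matrix.mulVec_smul, hRones]
    have h2 : (C *ᵥ Pi.single o (1 : ℂ)) a = C a o := by
      simp only [Matrix.mulVec, dotProduct]
      rw [Finset.sum_eq_single o]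
      · simp
      · intro b _ hb; simp [Pi.single_apply, hb]
      · simp
    have h3 := congrFun h1 a
    rw [h2] at h3
    rw [h3]
    by_cases ha : a = o <;> simp [ha]
  set b : Fin n → ℕ := fun j => if j = o then 0 else 1 with hb
  have hbt : C.BlockTriangular b := by
    intro a c hac
    have hco : c = o := by
      by_contra hco
      simp [hb, hco] at hac
      by_cases hao : a = o <;> simp [hao] at hac <;> omega
    subst hco
    have hao : a ≠ o := by
      intro hao; subst hao; simp at hac
    rw [hCcol a]
    simp [hao]
  have himg : Finset.image b Finset.univ = {0, 1} := by
    apply Finset.Subset.antisymm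
    · intro x hx
      simp only [Finset.mem_image, Finset.mem_univ, true_and] at hx
      obtain ⟨j, rfl⟩ := hx
      by_cases hj : j = o <;> simp [hb, hj]
    · intro x hx
      simp only [Finset.mem_insert, Finset.mem_singleton] at hx
      simp only [Finset.mem_image, Finset.mem_univ, true_and]
      rcases hx with rfl | rfl
      · exact ⟨o, by simp [hb]⟩
      · exact ⟨i, by simp [hb, hi]⟩
  have hfact : C.charpoly = (C.toSquareBlock b 0).charpoly * (C.toSquareBlock b 1).charpoly := by
    rw [hbt.charpoly, himg]
    rw [Finset.prod_insert (by simp)]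
    rw [Finset.prod_singleton]
  -- the 1×1 block
  have hd0mem : b o = 0 := by simp [hb]
  letI hu0 : Unique {a // b a = 0} :=
    ⟨⟨⟨o, hd0mem⟩⟩, by
      rintro ⟨a, ha⟩
      have hao : a = o := by
        by_contra h
        simp [hb, h] at ha
      subst hao
      rfl⟩
  have hblock0 : (C.toSquareBlock b 0).charpoly = X - Polynomial.C l1 := by
    have htri : (C.toSquareBlock b 0).BlockTriangular id := by
      intro a c hac
      have hac' : a = c := Subsingleton.elim a c
      subst hac'
      exact absurd hac (lt_irrefl _)
    rw [Matrix.charpoly_of_upperTriangular _ htri]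
    rw [Fintype.prod_unique]
    have hval : (C.toSquareBlock b 0) default default = l1 := by
      simp only [Matrix.toSquareBlock_def, Matrix.submatrix_apply, Matrix.of_apply]
      have hd : ((default : {a // b a = 0}) : Fin n) = o := rfl
      rw [hd, hCcol o, if_pos rfl]
    rw [hval]
  -- roots bookkeeping
  set M : Matrix {a // b a = 1} {a // b a = 1} ℂ := C.toSquareBlock b 1 with hM
  have hCN : C.charpoly = N.charpoly := aux_charpoly_conj Q R N hRQ hQR
  have hrootsC : (l1 ::ₘ M.charpoly.roots) = Finset.univ.val.map lam := by
    have hne : (X - Polynomial.C l1) * M.charpoly ≠ 0 := by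
      rw [← hblock0, ← hfact, hCN]
      exact N.charpoly_monic.ne_zero
    calc l1 ::ₘ M.charpoly.roots
        = (X - Polynomial.C l1).roots + M.charpoly.roots := by rw [Polynomial.roots_X_sub_C]; rfl
      _ = ((X - Polynomial.C l1) * M.charpoly).roots := (Polynomial.roots_mul hne).symm
      _ = N.charpoly.roots := by rw [← hblock0, ← hfact, hCN]
      _ = Finset.univ.val.map lam := hroots
  have huniv : (Finset.univ.val : Multiset (Fin n)) = o ::ₘ Finset.univ.val.erase o :=
    (Multiset.cons_erase (by simp : o ∈ Finset.univ.val)).symm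
  have hMroots : M.charpoly.roots = (Finset.univ.val.erase o).map lam := by
    have h2 : l1 ::ₘ M.charpoly.roots = l1 ::ₘ (Finset.univ.val.erase o).map lam := by
      rw [hrootsC, hl1]
      conv_lhs => rw [huniv]
      rw [Multiset.map_cons]
    exact (Multiset.cons_inj_right l1).mp h2
  have hmem : lam i ∈ M.charpoly.roots := by
    rw [hMroots]
    exact Multiset.mem_map_of_mem lam (Multiset.mem_erase_of_ne hi |>.mpr (by simp))
  have hisroot : (Mᵀ).charpoly.IsRoot (lam i) := by
    rw [aux_charpoly_transpose]
    exact Polynomial.isRoot_of_mem_roots hmem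
  obtain ⟨w, hw0, hw⟩ := aux_exists_eig Mᵀ hisroot
  -- build ζ on Fin n
  set zeta : Fin n → ℂ := fun a => if h : b a = 1 then w ⟨a, h⟩ else 0 with hzeta
  have hzo : zeta o = 0 := by simp [hzeta, hd0mem]
  have hbo : ∀ a : Fin n, a ≠ o ↔ b a = 1 := by
    intro a; by_cases h : a = o <;> simp [hb, h]
  have hzne : zeta ≠ 0 := by
    obtain ⟨s, hs⟩ := Function.ne_iff.mp hw0
    intro hcontra
    apply hs
    have := congrFun hcontra s.val
    simpa [hzeta, s.prop] using this
  have hCz : Cᵀ *ᵥ zeta = lam i • zeta := by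
    funext j
    have hlhs : (Cᵀ *ᵥ zeta) j = ∑ a, C a j * zeta a := by
      simp [Matrix.mulVec, dotProduct, Matrix.transpose_apply]
    rw [hlhs]
    have hsplit : ∑ a, C a j * zeta a = ∑ a : {a // b a = 1}, C a.val j * w a := by
      have e1 : (∑ a : Fin n, C a j * zeta a)
          = ∑ a ∈ Finset.univ.filter (fun a => b a = 1), C a j * zeta a := by
        rw [Finset.sum_filter]
        apply Finset.sum_congr rfl
        intro a _
        by_cases h : b a = 1 <;> simp [hzeta, h]
      have e2 := Finset.sum_subtype (p := fun a => b a = 1) (F := inferInstance)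
        (s := Finset.univ.filter (fun a => b a = 1)) (by intro x; simp)
        (fun a => C a j * zeta a)
      rw [e1, e2]
      apply Finset.sum_congr rfl
      intro a _
      simp [hzeta, a.prop]
    rw [hsplit]
    by_cases hj : b j = 1
    · have hr : ∑ a : {a // b a = 1}, C a.val j * w a = (Mᵀ *ᵥ w) ⟨j, hj⟩ := by
        simp only [Matrix.mulVec, dotProduct, Matrix.transpose_apply, hM,
          Matrix.toSquareBlock_def, Matrix.of_apply, Matrix.submatrix_apply]
      rw [hr, hw]
      simp [hzeta, hj]
    · have hjo : j = o := by
        by_contra h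
        exact hj ((hbo j).mp h)
      subst hjo
      rw [Finset.sum_eq_zero]
      · simp [hzeta, hzo, hd0mem]
      · intro a _
        have hao : a.val ≠ o := by
          intro h
          have := a.prop
          rw [h, hd0mem] at this
          omega
        rw [hCcol, if_neg hao, zero_mul]
  -- pull back through Q
  refine ⟨Rᵀ *ᵥ zeta, ?_, ?_, ?_⟩
  · intro hz0
    apply hzne
    have h1 : Qᵀ *ᵥ (Rᵀ *ᵥ zeta) = zeta := by
      rw [Matrix.mulVec_mulVec, ← Matrix.transpose_mul, hRQ, Matrix.transpose_one,
        Matrix.one_mulVec]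
    rw [hz0, Matrix.mulVec_zero] at h1
    exact h1.symm
  · have hsum : ∑ j, (Rᵀ *ᵥ zeta) j = ∑ a, (∑ j, R a j) * zeta a := by
      simp only [Matrix.mulVec, dotProduct, Matrix.transpose_apply]
      rw [Finset.sum_comm]
      apply Finset.sum_congr rfl
      intro a _
      rw [Finset.sum_mul]
    rw [hsum]
    rw [Finset.sum_eq_single o]
    · have : ∑ j, R o j = 1 := by
        have := congrFun hRones o
        simpa [Matrix.mulVec, dotProduct] using this
      rw [this, hzo, mul_zero]
    · intro a _ hao
      have : ∑ j, R a j = 0 := by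
        have := congrFun hRones a
        simpa [Matrix.mulVec, dotProduct, hao] using this
      rw [this, zero_mul]
    · simp
  · have hCt : Cᵀ = Qᵀ * Nᵀ * Rᵀ := by
      rw [hCdef, Matrix.transpose_mul, Matrix.transpose_mul]
      rw [Matrix.mul_assoc]
    have h1 : Qᵀ *ᵥ (Nᵀ *ᵥ (Rᵀ *ᵥ zeta)) = lam i • zeta := by
      rw [Matrix.mulVec_mulVec, Matrix.mulVec_mulVec, ← hCt, hCz]
    have h2 := congrArg (fun t => Rᵀ *ᵥ t) h1
    rw [Matrix.mulVec_mulVec] at h2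
    rw [← Matrix.transpose_mul, hQR, Matrix.transpose_one, Matrix.one_mulVec] at h2
    rw [h2, Matrix.mulVec_smul]

end

lemma aux_analytic {n : ℕ} (p : ℝ≥0∞) (hp : 1 ≤ p) (T : Matrix (Fin n) (Fin n) ℝ)
    (c : ℂ) (z : Fin n → ℂ) (hz : z ≠ 0) (hsum : (∑ j, z j) = 0)
    (heig : (T.map ((↑) : ℝ → ℂ))ᵀ *ᵥ z = c • z) :
    ‖c‖ ≤ tau p T := by
  haveI : Fact (1 ≤ p) := ⟨hp⟩
  set x : Fin n → ℝ := fun j => (z j).re with hxdef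
  set y : Fin n → ℝ := fun j => (z j).im with hydef
  have hxsum : (∑ j, x j) = 0 := by
    have := congrArg Complex.re hsum
    simpa [Complex.re_sum] using this
  have hysum : (∑ j, y j) = 0 := by
    have := congrArg Complex.im hsum
    simpa [Complex.im_sum] using this
  set a : ℝ := c.re with hadef
  set bb : ℝ := c.im with hbbdef
  have hkey : ∀ j, (∑ l, (T l j : ℂ) * z l) = c * z j := by
    intro j
    have h := congrFun heig j
    have hlhs : ((T.map ((↑) : ℝ → ℂ))ᵀ *ᵥ z) j = ∑ l, (T l j : ℂ) * z l := by
      simp [Matrix.mulVec, dotProduct, Matrix.transpose_apply, Matrix.map_apply]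
    rw [hlhs] at h
    simpa using h
  have heigx : Tᵀ *ᵥ x = fun j => a * x j - bb * y j := by
    funext j
    have h2 := congrArg Complex.re (hkey j)
    rw [Complex.re_sum] at h2
    simp only [Complex.mul_re, Complex.ofReal_re, Complex.ofReal_im, zero_mul, sub_zero] at h2
    simpa [Matrix.mulVec, dotProduct, Matrix.transpose_apply] using h2
  have heigy : Tᵀ *ᵥ y = fun j => a * y j + bb * x j := by
    funext j
    have h2 := congrArg Complex.im (hkey j)
    rw [Complex.im_sum] at h2
    simp only [Complex.mul_im, Complex.ofReal_re, Complex.ofReal_im, zero_mul, add_zero] at h2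
    simpa [Matrix.mulVec, dotProduct, Matrix.transpose_apply] using h2
  set r : ℝ := ‖c‖ with hrdef
  set ph : ℝ := Complex.arg c with hphdef
  have hra : r * Real.cos ph = a := Complex.norm_mul_cos_arg c
  have hrb : r * Real.sin ph = bb := Complex.norm_mul_sin_arg c
  set w : ℝ → (Fin n → ℝ) := fun θ => fun j => Real.cos θ * x j + Real.sin θ * y j with hwdef
  have hTw : ∀ θ, Tᵀ *ᵥ (w θ) = r • w (θ - ph) := by
    intro θ
    have hsplit : w θ = Real.cos θ • x + Real.sin θ • y := by
      funext j; simp [hwdef]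
    rw [hsplit, Matrix.mulVec_add, Matrix.mulVec_smul, Matrix.mulVec_smul, heigx, heigy]
    funext j
    simp only [Pi.add_apply, Pi.smul_apply, smul_eq_mul, hwdef]
    rw [Real.cos_sub, Real.sin_sub, ← hra, ← hrb]
    ring
  have hwsum : ∀ θ, (∑ j, w θ j) = 0 := by
    intro θ
    simp only [hwdef]
    rw [Finset.sum_add_distrib, ← Finset.mul_sum, ← Finset.mul_sum, hxsum, hysum,
      mul_zero, mul_zero, add_zero]
  set g : ℝ → ℝ := fun θ => lpNorm p (w θ) with hgdef
  have hgcont : Continuous g := by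
    have h1 : Continuous w := by
      apply continuous_pi
      intro j
      exact ((Real.continuous_cos.mul continuous_const).add
        (Real.continuous_sin.mul continuous_const))
    have h2 : Continuous (fun θ => (WithLp.equiv p (∀ _ : Fin n, ℝ)).symm (w θ)) :=
      (PiLp.continuous_toLp p (fun _ : Fin n => ℝ)).comp h1
    exact h2.norm
  have hgnonneg : ∀ θ, 0 ≤ g θ := fun θ => norm_nonneg _
  have hper : Function.Periodic g (2 * Real.pi) := by
    intro θ
    have : w (θ + 2 * Real.pi) = w θ := by
      funext j
      simp [hwdef, Real.cos_add_two_pi, Real.sin_add_two_pi]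
    simp [hgdef, this]
  have hpi : (0 : ℝ) < 2 * Real.pi := by positivity
  obtain ⟨θ₀, hθ₀mem, hθ₀max⟩ := (isCompact_Icc (a := (0:ℝ)) (b := 2 * Real.pi)).exists_isMaxOn
    (Set.nonempty_Icc.mpr (by linarith)) hgcont.continuousOn
  have hmax : ∀ θ, g θ ≤ g θ₀ := by
    intro θ
    obtain ⟨ψ, hψmem, hψeq⟩ := hper.exists_mem_Ico₀ hpi θ
    rw [hψeq]
    exact hθ₀max (Set.mem_of_mem_of_subset hψmem (Set.Ico_subset_Icc_self.trans
      (Set.Icc_subset_Icc_right (le_refl _))))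
  have hlp_smul : ∀ (t : ℝ) (ω : Fin n → ℝ), lpNorm p (t • ω) = |t| * lpNorm p ω := by
    intro t ω
    show ‖(WithLp.equiv p (∀ _ : Fin n, ℝ)).symm (t • ω)‖ = _
    rw [show (WithLp.equiv p (∀ _ : Fin n, ℝ)).symm (t • ω)
        = t • (WithLp.equiv p (∀ _ : Fin n, ℝ)).symm ω from rfl, norm_smul]
    simp [Real.norm_eq_abs, lpNorm]
  have hlp_zero : ∀ ω : Fin n → ℝ, lpNorm p ω = 0 → ω = 0 := by
    intro ω h
    have h0 : (WithLp.equiv p (∀ _ : Fin n, ℝ)).symm ω = 0 := norm_eq_zero.mp h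
    funext j
    exact congrFun (congrArg WithLp.ofLp h0) j
  have hz_xy : x ≠ 0 ∨ y ≠ 0 := by
    by_contra h
    push_neg at h
    apply hz
    funext j
    have hx0 := congrFun h.1 j
    have hy0 := congrFun h.2 j
    apply Complex.ext
    · simpa [hxdef] using hx0
    · simpa [hydef] using hy0
  have hw0x : w 0 = x := by funext j; simp [hwdef]
  have hwhy : w (Real.pi / 2) = y := by funext j; simp [hwdef]
  have hgpos : 0 < g θ₀ := by
    rcases hz_xy with hx | hy
    · have h1 : g 0 ≠ 0 := by
        intro h0
        exact hx (by rw [← hw0x]; exact hlp_zero _ h0)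
      have := hmax 0
      have h2 : 0 ≤ g 0 := hgnonneg 0
      rcases lt_or_eq_of_le h2 with h3 | h3
      · linarith
      · exact absurd h3.symm h1
    · have h1 : g (Real.pi / 2) ≠ 0 := by
        intro h0
        exact hy (by rw [← hwhy]; exact hlp_zero _ h0)
      have := hmax (Real.pi / 2)
      have h2 : 0 ≤ g (Real.pi / 2) := hgnonneg _
      rcases lt_or_eq_of_le h2 with h3 | h3
      · linarith
      · exact absurd h3.symm h1
  have hT0 : Tᵀ *ᵥ w (θ₀ + ph) = r • w θ₀ := by
    rw [hTw (θ₀ + ph), add_sub_cancel_right]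
  -- the tau set and its bounded-above-ness
  set S : Set ℝ :=
    { t : ℝ | ∃ x' : Fin n → ℝ, (∑ i, x' i) = 0 ∧ lpNorm p x' = 1 ∧ t = lpNorm p (Tᵀ *ᵥ x') }
    with hSdef
  have htau : tau p T = sSup S := rfl
  set eL := WithLp.linearEquiv p ℝ (∀ _ : Fin n, ℝ) with heL
  set G := LinearMap.toContinuousLinearMap
    (eL.symm.toLinearMap ∘ₗ ((Matrix.mulVecLin Tᵀ) ∘ₗ eL.toLinearMap)) with hG
  have hSbdd : BddAbove S := by
    refine ⟨‖G‖, ?_⟩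
    rintro t ⟨x', h1, h2, rfl⟩
    have hGx : G (eL.symm x') = (WithLp.equiv p (∀ _ : Fin n, ℝ)).symm (Tᵀ *ᵥ x') := by
      simp only [hG, LinearMap.coe_toContinuousLinearMap', LinearMap.coe_comp,
        Function.comp_apply, LinearEquiv.coe_coe]
      rw [LinearEquiv.apply_symm_apply]
      rfl
    have hb := G.le_opNorm (eL.symm x')
    rw [hGx] at hb
    have hnx : ‖eL.symm x'‖ = 1 := h2
    rw [hnx, mul_one] at hb
    exact hb
  have hr0 : 0 ≤ r := norm_nonneg c
  have hrle : r ≤ tau p T := by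
    by_cases hc1 : g (θ₀ + ph) = 0
    · -- then r = 0 and tau ≥ 0
      have hw0 : w (θ₀ + ph) = 0 := hlp_zero _ hc1
      have hr00 : r = 0 := by
        have h0 : r • w θ₀ = 0 := by rw [← hT0, hw0, Matrix.mulVec_zero]
        rcases smul_eq_zero.mp h0 with h | h
        · exact h
        · exfalso
          have hzz : lpNorm p (w θ₀) = 0 := by rw [h]; simp [lpNorm]
          have hgz : g θ₀ = 0 := hzz
          linarith
      rw [hr00]
      set u : Fin n → ℝ := (g θ₀)⁻¹ • w θ₀ with hu
      have husum : (∑ j, u j) = 0 := by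
        simp only [hu, Pi.smul_apply, smul_eq_mul, ← Finset.mul_sum, hwsum θ₀, mul_zero]
      have hunorm : lpNorm p u = 1 := by
        rw [hu, hlp_smul, abs_of_pos (inv_pos.mpr hgpos)]
        exact inv_mul_cancel₀ (ne_of_gt hgpos)
      have hmemS : lpNorm p (Tᵀ *ᵥ u) ∈ S := ⟨u, husum, hunorm, rfl⟩
      have := le_csSup hSbdd hmemS
      have h0 : (0:ℝ) ≤ lpNorm p (Tᵀ *ᵥ u) := norm_nonneg _
      rw [htau]
      linarith
    · have hc1pos : 0 < g (θ₀ + ph) := lt_of_le_of_ne (hgnonneg _) (Ne.symm hc1)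
      set c1 := g (θ₀ + ph) with hc1def
      set u : Fin n → ℝ := c1⁻¹ • w (θ₀ + ph) with hu
      have husum : (∑ j, u j) = 0 := by
        simp only [hu, Pi.smul_apply, smul_eq_mul, ← Finset.mul_sum, hwsum (θ₀ + ph), mul_zero]
      have hunorm : lpNorm p u = 1 := by
        rw [hu, hlp_smul, abs_of_pos (inv_pos.mpr hc1pos)]
        exact inv_mul_cancel₀ (ne_of_gt hc1pos)
      have hval : lpNorm p (Tᵀ *ᵥ u) = c1⁻¹ * (r * g θ₀) := by
        rw [hu, Matrix.mulVec_smul, hT0, hlp_smul, abs_of_pos (inv_pos.mpr hc1pos)]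
        congr 1
        rw [hlp_smul, abs_of_nonneg hr0]
      have hmemS : lpNorm p (Tᵀ *ᵥ u) ∈ S := ⟨u, husum, hunorm, rfl⟩
      have hle := le_csSup hSbdd hmemS
      rw [hval] at hle
      have hge : r ≤ c1⁻¹ * (r * g θ₀) := by
        have h1 : c1 ≤ g θ₀ := hmax (θ₀ + ph)
        have h2 : r * c1 ≤ r * g θ₀ := mul_le_mul_of_nonneg_left h1 hr0
        rw [← mul_le_mul_iff_of_pos_left hc1pos]
        calc c1 * r = r * c1 := mul_comm _ _
          _ ≤ r * g θ₀ := h2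
          _ = c1 * (c1⁻¹ * (r * g θ₀)) := by
              field_simp
      rw [htau]
      exact le_trans hge hle
  exact hrle


/-- Corollary 3: with `B = D⁻¹ A D`, `D = diag v`, every eigenvalue
`λ_i` (`i ≥ 2`) of `A` satisfies `|λ_i| ≤ (τ_p(B^k))^{1/k}` for every admissible `p`
and every positive integer `k`. -/

theorem stmt13 {n : ℕ} (hn : 0 < n) (A : Matrix (Fin n) (Fin n) ℝ)
    (lam : Fin n → ℂ)
    (hroots : ((A.map ((↑) : ℝ → ℂ)).charpoly).roots = Finset.univ.val.map lam)
    (lam1 : ℝ) (hlam1 : lam ⟨0, hn⟩ = (lam1 : ℂ))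
    (v : Fin n → ℝ) (hv : ∀ i, v i ≠ 0) (hAv : A *ᵥ v = lam1 • v)
    (D B : Matrix (Fin n) (Fin n) ℝ) (hD : D = Matrix.diagonal v) (hB : B = D⁻¹ * A * D)
    (p : ℝ≥0∞) (hp : 1 ≤ p) (hp' : p = ⊤ ∨ ∃ m : ℕ, p = m)
    (i : Fin n) (hi : i ≠ ⟨0, hn⟩) (k : ℕ) (hk : 0 < k) :
    ‖lam i‖ ≤ (tau p (B ^ k)) ^ ((1 : ℝ) / k) := by
  classical
  set E : Matrix (Fin n) (Fin n) ℝ := Matrix.diagonal (fun j => (v j)⁻¹) with hE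
  have hED : E * D = 1 := by
    rw [hE, hD, Matrix.diagonal_mul_diagonal]
    rw [show (fun j => (v j)⁻¹ * v j) = fun _ => (1:ℝ) from
      funext fun j => inv_mul_cancel₀ (hv j)]
    exact Matrix.diagonal_one
  have hDE : D * E = 1 := by
    rw [hE, hD, Matrix.diagonal_mul_diagonal]
    rw [show (fun j => v j * (v j)⁻¹) = fun _ => (1:ℝ) from
      funext fun j => mul_inv_cancel₀ (hv j)]
    exact Matrix.diagonal_one
  have hDinv : D⁻¹ = E := Matrix.inv_eq_left_inv hED
  have hB' : B = E * A * D := by rw [hB, hDinv]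
  have hBones : B *ᵥ (fun _ => (1:ℝ)) = lam1 • (fun _ => (1:ℝ)) := by
    rw [hB', ← Matrix.mulVec_mulVec, ← Matrix.mulVec_mulVec]
    have h1 : D *ᵥ (fun _ => (1:ℝ)) = v := by
      funext j
      rw [hD]
      simp [Matrix.mulVec_diagonal]
    rw [h1, hAv, Matrix.mulVec_smul]
    have h2 : E *ᵥ v = fun _ => (1:ℝ) := by
      funext j
      simp [hE, Matrix.mulVec_diagonal, inv_mul_cancel₀ (hv j)]
    rw [h2]
  -- complexification
  have hmapmul : ∀ (M N : Matrix (Fin n) (Fin n) ℝ),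
      (M * N).map ((↑) : ℝ → ℂ) = M.map ((↑) : ℝ → ℂ) * N.map ((↑) : ℝ → ℂ) := by
    intro M N
    funext a b'
    simp [Matrix.map_apply, Matrix.mul_apply]
  have hmapone : ((1 : Matrix (Fin n) (Fin n) ℝ)).map ((↑) : ℝ → ℂ) = 1 := by
    funext a b'
    by_cases h : a = b' <;> simp [Matrix.map_apply, Matrix.one_apply, h]
  have hchar : (B.map ((↑) : ℝ → ℂ)).charpoly = (A.map ((↑) : ℝ → ℂ)).charpoly := by
    have hBm : B.map ((↑) : ℝ → ℂ)
        = (E.map ((↑) : ℝ → ℂ)) * (A.map ((↑) : ℝ → ℂ)) * (D.map ((↑) : ℝ → ℂ)) := by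
      rw [hB', hmapmul, hmapmul]
    rw [hBm]
    exact aux_charpoly_conj _ _ _
      (by rw [← hmapmul, hED, hmapone]) (by rw [← hmapmul, hDE, hmapone])
  have hrootsB : (B.map ((↑) : ℝ → ℂ)).charpoly.roots = Finset.univ.val.map lam := by
    rw [hchar]; exact hroots
  have hN1ones : (B.map ((↑) : ℝ → ℂ)) *ᵥ (fun _ => (1:ℂ))
      = lam ⟨0, hn⟩ • (fun _ => (1:ℂ)) := by
    funext j
    have hr := congrFun hBones j
    simp only [Matrix.mulVec, dotProduct, mul_one, Pi.smul_apply, smul_eq_mul] at hr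
    simp only [Matrix.mulVec, dotProduct, mul_one, Pi.smul_apply, smul_eq_mul,
      Matrix.map_apply, hlam1]
    rw [← Complex.ofReal_sum, hr]
  obtain ⟨z, hz0, hzsum, hzeig⟩ :=
    aux_left_eigvec hn (B.map ((↑) : ℝ → ℂ)) lam hrootsB hN1ones i hi
  have hmapk : ∀ m : ℕ, (B ^ m).map ((↑) : ℝ → ℂ) = (B.map ((↑) : ℝ → ℂ)) ^ m := by
    intro m
    induction m with
    | zero => simpa using hmapone
    | succ m ih => rw [pow_succ, pow_succ, hmapmul, ih]
  have hpowvec : ∀ m : ℕ, ((B.map ((↑) : ℝ → ℂ))ᵀ ^ m) *ᵥ z = (lam i ^ m) • z := by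
    intro m
    induction m with
    | zero => simp
    | succ m ih =>
      rw [pow_succ, ← Matrix.mulVec_mulVec, hzeig, Matrix.mulVec_smul, ih, smul_smul,
        pow_succ, mul_comm]
  have hpow : ((B ^ k).map ((↑) : ℝ → ℂ))ᵀ *ᵥ z = (lam i ^ k) • z := by
    rw [hmapk k, Matrix.transpose_pow]
    exact hpowvec k
  have habs := aux_analytic p hp (B ^ k) (lam i ^ k) z hz0 hzsum hpow
  rw [norm_pow] at habs
  have hb0 : (0:ℝ) ≤ ‖lam i‖ := norm_nonneg _
  have hk0 : (k:ℝ) ≠ 0 := Nat.cast_ne_zero.mpr hk.ne'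
  calc ‖lam i‖
      = ((‖lam i‖) ^ k) ^ ((1:ℝ)/k) := by
        rw [← Real.rpow_natCast (‖lam i‖) k, ← Real.rpow_mul hb0,
          mul_one_div, div_self hk0, Real.rpow_one]
    _ ≤ (tau p (B ^ k)) ^ ((1:ℝ)/k) :=
        Real.rpow_le_rpow (by positivity) habs (by positivity)
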